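/- Let ε ∈ (0,1), r ∈ (0,1], and y > 0. Then M_P((1 + rε)y/(1 + ε), y/(1 + ε)) > M_P((1 − ε − rε)y/(1 + ε), y/(1 − ε)). -/

import Mathlib

/-- Extended-real-valued Poisson exponent: `M_P(z, λ) = z − λ + z·ln(λ/z)` for
`z > 0`, `M_P(0, λ) = −λ`, and `M_P(z, λ) = −∞` for `z < 0`. -/
noncomputable def MPe (z lam : ℝ) : EReal :=
  if 0 < z then ((z - lam + z * Real.log (lam / z) : ℝ) : EReal)
  else if z = 0 then ((-lam : ℝ) : EReal)
  else ⊥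

/-- For `ε ∈ (0,1)`, `r ∈ (0,1]`, `y > 0`:
`M_P((1 + rε)y/(1 + ε), y/(1 + ε)) > M_P((1 − ε − rε)y/(1 + ε), y/(1 − ε))`,
where the right-hand side is `−∞` when its first argument is negative. -/
lemma logb (x : ℝ) (hx0 : 0 < x) : x * (-Real.log x) ≤ 1 - x := by
  have h := Real.log_le_sub_one_of_pos (show (0:ℝ) < x⁻¹ by positivity)
  rw [Real.log_inv] at h
  have hinv : x * x⁻¹ = 1 := mul_inv_cancel₀ hx0.ne'
  nlinarith [mul_le_mul_of_nonneg_left h hx0.le]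

lemma key (ε s : ℝ) (hs0 : 0 < s) (hsε : s ≤ ε) (hε1 : ε < 1) (hv : 0 < 1 - ε - s) :
    (1 - ε - s) - (1+ε)/(1-ε) + (1-ε-s) * Real.log ((1+ε)/((1-ε)*(1-ε-s)))
      < s - (1+s) * Real.log (1+s) := by
  have hε0 : 0 < ε := lt_of_lt_of_le hs0 hsε
  have hd : 0 < 1 - ε := by linarith
  have hlog : Real.log ((1+ε)/((1-ε)*(1-ε-s)))
      = Real.log (1+ε) - Real.log (1-ε) - Real.log (1-ε-s) := by
    rw [Real.log_div (by positivity) (by positivity), Real.log_mul hd.ne' hv.ne']; ring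
  have h1 : Real.log (1+s) < s := by
    have := Real.log_lt_sub_one_of_pos (show (0:ℝ) < 1+s by linarith) (by nlinarith)
    linarith
  have h2 : Real.log (1+ε) ≤ ε := by
    have := Real.log_le_sub_one_of_pos (show (0:ℝ) < 1+ε by linarith); linarith
  have h3 : (1-ε) * (-Real.log (1-ε)) ≤ ε := by
    have := logb (1-ε) hd; linarith
  have h4 : (1-ε-s) * (-Real.log (1-ε-s)) ≤ ε + s := by
    have := logb (1-ε-s) hv; linarith
  have hb0 : 0 ≤ -Real.log (1-ε) := by
    have := Real.log_nonpos (by linarith) (by linarith : (1:ℝ)-ε ≤ 1); linarith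
  have hq : (1-ε) * ((1+ε)/(1-ε)) = 1+ε := by field_simp
  have hvb : (1-ε-s) * (-Real.log (1-ε)) ≤ ε := by nlinarith
  have hva : (1-ε-s) * Real.log (1+ε) ≤ (1-ε-s) * ε :=
    mul_le_mul_of_nonneg_left h2 hv.le
  have hL : (1+s) * Real.log (1+s) < (1+s) * s :=
    mul_lt_mul_of_pos_left h1 (by linarith)
  rw [hlog]
  nlinarith [hq, hva, hvb, h4, hL, mul_pos hε0 hs0, mul_nonneg (sub_nonneg.2 hsε) hs0.le, sq_nonneg ε, mul_pos hd hε0]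

theorem mp_rel_error_ineq (ε r y : ℝ) (hε0 : 0 < ε) (hε1 : ε < 1)
    (hr0 : 0 < r) (hr1 : r ≤ 1) (hy : 0 < y) :
    MPe ((1 - ε - r * ε) * y / (1 + ε)) (y / (1 - ε)) <
      MPe ((1 + r * ε) * y / (1 + ε)) (y / (1 + ε)) := by
  have hs0 : 0 < r * ε := mul_pos hr0 hε0
  have hsε : r * ε ≤ ε := by nlinarith
  have hd : 0 < 1 - ε := by linarith
  have hp : 0 < 1 + ε := by linarith
  have hz1 : 0 < (1 + r * ε) * y / (1 + ε) := by positivity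
  have hne1 : (1 + r * ε) ≠ 0 := by positivity
  have harg1 : (y / (1 + ε)) / ((1 + r * ε) * y / (1 + ε)) = (1 + r * ε)⁻¹ := by
    field_simp
  simp only [MPe]
  rw [if_pos hz1]
  rcases lt_trichotomy ((1 - ε - r * ε) * y / (1 + ε)) 0 with h | h | h
  · rw [if_neg (not_lt.mpr h.le), if_neg h.ne]
    exact EReal.bot_lt_coe _
  · rw [if_neg (by rw [h]; exact lt_irrefl 0), if_pos h]
    have hv0 : 1 - ε - r * ε = 0 := by
      rcases mul_eq_zero.mp ((div_eq_zero_iff.mp h).resolve_right hp.ne') with h' | h'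
      · exact h'
      · exact absurd h' hy.ne'
    rw [harg1, Real.log_inv]
    have hcoe : ∀ a b : ℝ, a < b → ((a:EReal) < (b:EReal)) := fun a b hab => EReal.coe_lt_coe_iff.mpr hab
    apply hcoe
    have h1 : Real.log (1 + r * ε) < r * ε := by
      have := Real.log_lt_sub_one_of_pos (show (0:ℝ) < 1 + r * ε by linarith) (by nlinarith)
      linarith
    have e1 : y / (1 - ε) = y / (1 + ε) * ((1 + ε) / (1 - ε)) := by
      field_simp
    have hμ : 0 < y / (1 + ε) := by positivity
    have e2 : (1 + r * ε) * y / (1 + ε) - y / (1 + ε) + (1 + r * ε) * y / (1 + ε) * (-Real.log (1 + r * ε))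
        = y / (1 + ε) * (r * ε - (1 + r * ε) * Real.log (1 + r * ε)) := by ring
    rw [e1, e2]
    have : -((1 + ε) / (1 - ε)) < r * ε - (1 + r * ε) * Real.log (1 + r * ε) := by
      have hq : (1 - ε) * ((1 + ε) / (1 - ε)) = 1 + ε := by field_simp
      nlinarith [mul_lt_mul_of_pos_left h1 (show (0:ℝ) < 1 + r * ε by linarith),
        mul_pos hs0 hs0, sq_nonneg (r * ε), mul_pos hd hs0]
    nlinarith [mul_lt_mul_of_pos_left this hμ]
  · rw [if_pos h]
    have hv : 0 < 1 - ε - r * ε := by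
      have hAy : 0 < (1 - ε - r * ε) * y := by
        rcases div_pos_iff.mp h with ⟨h1, _⟩ | ⟨_, h2⟩
        · exact h1
        · linarith
      by_contra hA
      push_neg at hA
      nlinarith [mul_nonneg (neg_nonneg.mpr hA) hy.le]
    have harg2 : (y / (1 - ε)) / ((1 - ε - r * ε) * y / (1 + ε))
        = (1 + ε) / ((1 - ε) * (1 - ε - r * ε)) := by
      field_simp
    rw [harg1, harg2, Real.log_inv]
    have hcoe : ∀ a b : ℝ, a < b → ((a:EReal) < (b:EReal)) := fun a b hab => EReal.coe_lt_coe_iff.mpr hab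
    apply hcoe
    have hμ : 0 < y / (1 + ε) := by positivity
    have e2 : (1 + r * ε) * y / (1 + ε) - y / (1 + ε) + (1 + r * ε) * y / (1 + ε) * (-Real.log (1 + r * ε))
        = y / (1 + ε) * (r * ε - (1 + r * ε) * Real.log (1 + r * ε)) := by ring
    have e3 : (1 - ε - r * ε) * y / (1 + ε) - y / (1 - ε)
        + (1 - ε - r * ε) * y / (1 + ε) * Real.log ((1 + ε) / ((1 - ε) * (1 - ε - r * ε)))
        = y / (1 + ε) * ((1 - ε - r * ε) - (1 + ε) / (1 - ε)
            + (1 - ε - r * ε) * Real.log ((1 + ε) / ((1 - ε) * (1 - ε - r * ε)))) := by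
      field_simp
    rw [e2, e3]
    exact mul_lt_mul_of_pos_left (key ε (r * ε) hs0 hsε hε1 hv) hμ
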